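/- The blow-up of the 5-cycle with parts of sizes x1, x2, x3, x4, x5 is triangle-free, and the number of 5-cycles (as subgraphs, i.e., unlabeled copies of C5) it contains is exactly x1*x2*x3*x4*x5. -/

import Mathlib

/-- The number of (unlabeled) copies of `C₅` in a graph: the number of
5-element vertex subsets inducing a 5-cycle. -/
noncomputable def c5Count {V : Type*} [Fintype V] (G : SimpleGraph V) : ℕ :=
  Set.ncard {s : Finset V | s.card = 5 ∧
    Nonempty (G.induce (s : Set V) ≃g SimpleGraph.cycleGraph 5)}

/-- The blow-up of `C₅` along a part-assignment `f : V → Fin 5`: edges exactly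
between consecutive parts (indices mod 5). -/
def blowupC5 {V : Type*} (f : V → Fin 5) : SimpleGraph V where
  Adj u w := f w = f u + 1 ∨ f u = f w + 1
  symm := ⟨fun _ _ h => h.symm⟩
  loopless := ⟨fun u h => by
    rcases h with h | h <;> · rw [left_eq_add] at h; exact one_ne_zero h⟩

private lemma fin5_no_tri : ∀ p q r : Fin 5,
    (q = p + 1 ∨ p = q + 1) → (r = p + 1 ∨ p = r + 1) → (r = q + 1 ∨ q = r + 1) → False := by
  decide

private lemma fin5_nbhd : ∀ a b : Fin 5, a ≠ b →
    (∀ c, (SimpleGraph.cycleGraph 5).Adj a c ↔ (SimpleGraph.cycleGraph 5).Adj b c) → False := by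
  decide

private lemma fin5_adj_iff : ∀ p q : Fin 5,
    (SimpleGraph.cycleGraph 5).Adj p q ↔ (q = p + 1 ∨ p = q + 1) := by decide

private lemma sigma_cast_eq {x : Fin 5 → ℕ} {v : (i : Fin 5) × Fin (x i)} {i : Fin 5}
    (h : v.1 = i) : (⟨i, Fin.cast (congrArg x h) v.2⟩ : (i : Fin 5) × Fin (x i)) = v := by
  cases v; subst h; rfl

section main
variable (x : Fin 5 → ℕ)

private abbrev Vt := (i : Fin 5) × Fin (x i)

private lemma iso_iff (s : Finset (Vt x)) (h5 : s.card = 5) :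
    Nonempty ((blowupC5 (Sigma.fst : Vt x → Fin 5)).induce (s : Set (Vt x)) ≃g
      SimpleGraph.cycleGraph 5) ↔ Set.InjOn Sigma.fst (s : Set (Vt x)) := by
  set G := blowupC5 (Sigma.fst : Vt x → Fin 5)
  constructor
  · rintro ⟨φ⟩ u hu v hv hf
    by_contra hne
    set u' : (s : Set (Vt x)) := ⟨u, hu⟩
    set v' : (s : Set (Vt x)) := ⟨v, hv⟩
    have hne' : φ u' ≠ φ v' := fun h => hne (congrArg Subtype.val (φ.injective h))
    refine fin5_nbhd (φ u') (φ v') hne' fun c => ?_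
    have h1 : ∀ w : (s : Set (Vt x)), G.Adj u w.1 ↔ G.Adj v w.1 := by
      intro w
      show (w.1.1 = u.1 + 1 ∨ u.1 = w.1.1 + 1) ↔ (w.1.1 = v.1 + 1 ∨ v.1 = w.1.1 + 1)
      rw [hf]
    calc (SimpleGraph.cycleGraph 5).Adj (φ u') c
        ↔ (SimpleGraph.cycleGraph 5).Adj (φ u') (φ (φ.symm c)) := by
          rw [RelIso.apply_symm_apply]
      _ ↔ (G.induce (s : Set (Vt x))).Adj u' (φ.symm c) := φ.map_rel_iff
      _ ↔ G.Adj u ((φ.symm c : (s : Set (Vt x))) : Vt x) := Iff.rfl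
      _ ↔ G.Adj v ((φ.symm c : (s : Set (Vt x))) : Vt x) := h1 _
      _ ↔ (G.induce (s : Set (Vt x))).Adj v' (φ.symm c) := Iff.rfl
      _ ↔ (SimpleGraph.cycleGraph 5).Adj (φ v') (φ (φ.symm c)) := φ.map_rel_iff.symm
      _ ↔ (SimpleGraph.cycleGraph 5).Adj (φ v') c := by rw [RelIso.apply_symm_apply]
  · intro hinj
    have hcard : Fintype.card (s : Set (Vt x)) = 5 := by
      simp [h5]
    have hbij : Function.Bijective (fun v : (s : Set (Vt x)) => v.1.1) := by
      rw [Fintype.bijective_iff_injective_and_card, hcard]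
      refine ⟨fun a b h => Subtype.ext (hinj a.2 b.2 h), by simp⟩
    refine ⟨⟨Equiv.ofBijective _ hbij, ?_⟩⟩
    intro a b
    rw [fin5_adj_iff]
    exact Iff.rfl

private def Fmap [DecidableEq (Vt x)] (g : ∀ i, Fin (x i)) : Finset (Vt x) :=
  Finset.image (fun i => (⟨i, g i⟩ : Vt x)) Finset.univ

private lemma mk_inj (g : ∀ i, Fin (x i)) :
    Function.Injective (fun i => (⟨i, g i⟩ : Vt x)) :=
  fun i j h => congrArg Sigma.fst h

private lemma Fmap_card [DecidableEq (Vt x)] (g : ∀ i, Fin (x i)) : (Fmap x g).card = 5 := by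
  rw [Fmap, Finset.card_image_of_injective _ (mk_inj x g), Finset.card_univ, Fintype.card_fin]

private lemma Fmap_inj [DecidableEq (Vt x)] : Function.Injective (Fmap x) := by
  intro g g' h
  funext i
  have hm : (⟨i, g i⟩ : Vt x) ∈ Fmap x g' := by
    rw [← h]; exact Finset.mem_image_of_mem _ (Finset.mem_univ i)
  obtain ⟨j, -, hj⟩ := Finset.mem_image.mp hm
  obtain ⟨h1, h2⟩ := Sigma.mk.inj_iff.mp hj
  subst h1
  exact (eq_of_heq h2).symm

private lemma set_eq [DecidableEq (Vt x)] :
    {s : Finset (Vt x) | s.card = 5 ∧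
      Nonempty ((blowupC5 (Sigma.fst : Vt x → Fin 5)).induce (s : Set (Vt x)) ≃g
        SimpleGraph.cycleGraph 5)} = ↑(Finset.image (Fmap x) Finset.univ) := by
  ext s
  simp only [Set.mem_setOf_eq, Finset.coe_image, Finset.coe_univ, Set.image_univ,
    Set.mem_range]
  constructor
  · rintro ⟨h5, hiso⟩
    have hinj := (iso_iff x s h5).mp hiso
    have hcard : Fintype.card (s : Set (Vt x)) = 5 := by
      simp [h5]
    have hbij : Function.Bijective (fun v : (s : Set (Vt x)) => v.1.1) := by
      rw [Fintype.bijective_iff_injective_and_card, hcard]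
      refine ⟨fun a b h => Subtype.ext (hinj a.2 b.2 h), by simp⟩
    set e := Equiv.ofBijective _ hbij with he_def
    have he : ∀ i, ((e.symm i : (s : Set (Vt x))) : Vt x).1 = i := fun i =>
      e.apply_symm_apply i
    refine ⟨fun i => Fin.cast (congrArg x (he i)) ((e.symm i : (s : Set (Vt x))) : Vt x).2, ?_⟩
    apply Finset.eq_of_subset_of_card_le
    · intro v hv
      obtain ⟨i, -, hi⟩ := Finset.mem_image.mp hv
      rw [← hi, sigma_cast_eq (he i)]
      exact (e.symm i).2
    · rw [h5, Fmap_card]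
  · rintro ⟨g, hg⟩
    have h5 : s.card = 5 := by rw [← hg, Fmap_card]
    refine ⟨h5, (iso_iff x s h5).mpr ?_⟩
    intro u hu v hv hf
    rw [← hg] at hu hv
    obtain ⟨i, -, hi⟩ := Finset.mem_image.mp hu
    obtain ⟨j, -, hj⟩ := Finset.mem_image.mp hv
    rw [← hi, ← hj] at hf ⊢
    simp only at hf
    subst hf
    rfl

end main

/-- The blow-up of `C₅` with parts of sizes `x₀,…,x₄` is triangle-free and
contains exactly `x₀·x₁·x₂·x₃·x₄` copies of `C₅`. -/
theorem blowup_triangle_free_and_c5_count (x : Fin 5 → ℕ) :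
    (blowupC5 (Sigma.fst : ((i : Fin 5) × Fin (x i)) → Fin 5)).CliqueFree 3 ∧
    c5Count (blowupC5 (Sigma.fst : ((i : Fin 5) × Fin (x i)) → Fin 5)) =
      ∏ i, x i := by
  classical
  constructor
  · intro t ht
    obtain ⟨a, b, c, hab, hac, hbc, hteq⟩ := Finset.card_eq_three.mp ht.2
    have ha : a ∈ t := by rw [hteq]; simp
    have hb : b ∈ t := by rw [hteq]; simp
    have hc : c ∈ t := by rw [hteq]; simp
    exact fin5_no_tri a.1 b.1 c.1 (ht.1 ha hb hab) (ht.1 ha hc hac) (ht.1 hb hc hbc)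
  · rw [c5Count, set_eq, Set.ncard_coe_finset,
      Finset.card_image_of_injective _ (Fmap_inj x), Finset.card_univ]
    simp [Fintype.card_pi]
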